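/- Let k be a fixed positive integer, and for each n let f_n: {1,...,n} → {1,...,n} be a function in which every value has at most k preimages. Then (number of permutations g of {1,...,n} with g(i) ≠ f_n(i) for all i)/n! → 1/e as n → ∞. -/

import Mathlib

open Filter

open Finset Equiv

variable {n : ℕ}

lemma card_fix (S : Finset (Fin n)) :
    (Finset.univ.filter fun h : Perm (Fin n) => ∀ i ∈ S, h i = i).card
      = Nat.factorial (n - S.card) := by
  classical
  rw [← Fintype.card_subtype]
  have e1 : {h : Perm (Fin n) // ∀ i ∈ S, h i = i}
      ≃ {h : Perm (Fin n) // ∀ a, ¬ (a ∉ S) → h a = a} :=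
    Equiv.subtypeEquivRight (by
      intro h
      constructor
      · intro H a ha; exact H a (not_not.mp ha)
      · intro H a ha; exact H a (not_not_intro ha))
  have : Fintype.card {h : Perm (Fin n) // ∀ i ∈ S, h i = i}
      = Fintype.card (Perm {a : Fin n // a ∉ S}) :=
    Fintype.card_congr (e1.trans (Equiv.Perm.subtypeEquivSubtypePerm (fun a : Fin n => a ∉ S)).symm)
  rw [this, Fintype.card_perm]
  congr 1
  rw [Fintype.card_subtype]
  simp [Finset.filter_not, Finset.filter_mem_eq_inter, Finset.card_sdiff_of_subset (Finset.subset_univ S)]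

lemma card_agree (f : Fin n → Fin n) (S : Finset (Fin n)) (hinj : Set.InjOn f ↑S) :
    (Finset.univ.filter fun g : Perm (Fin n) => ∀ i ∈ S, g i = f i).card
      = Nat.factorial (n - S.card) := by
  classical
  obtain ⟨g, hg⟩ := Finset.exists_equiv_extend_of_card_eq
    (t := (Finset.univ : Finset (Fin n)))
    (by simp) (f := f) (s := S) (Finset.subset_univ _) hinj
  set g₀ : Perm (Fin n) := g.trans (Equiv.subtypeUnivEquiv fun x => Finset.mem_univ x) with hg₀
  have hg₀S : ∀ i ∈ S, g₀ i = f i := by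
    intro i hi
    simpa [hg₀, Equiv.subtypeUnivEquiv] using hg i hi
  rw [← card_fix S]
  apply Finset.card_bij' (fun h _ => g₀⁻¹ * h) (fun h _ => g₀ * h)
  · intro h hh
    simp only [Finset.mem_filter, Finset.mem_univ, true_and] at hh ⊢
    intro i hi
    rw [Perm.mul_apply, hh i hi, ← hg₀S i hi]
    simp
  · intro h hh
    simp only [Finset.mem_filter, Finset.mem_univ, true_and] at hh ⊢
    intro i hi
    rw [Perm.mul_apply, hh i hi, hg₀S i hi]
  · intro h _; group
  · intro g' _; group

lemma card_agree_zero (f : Fin n → Fin n) (S : Finset (Fin n)) (hninj : ¬ Set.InjOn f ↑S) :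
    (Finset.univ.filter fun g : Perm (Fin n) => ∀ i ∈ S, g i = f i).card = 0 := by
  rw [Finset.card_eq_zero, Finset.filter_eq_empty_iff]
  intro g _ hgf
  exact hninj (fun a ha b hb hab => g.injective (by
    rw [hgf a ha, hgf b hb] at *; exact hab))

lemma key_identity (f : Fin n → Fin n) :
    ((Finset.univ.filter fun g : Perm (Fin n) => ∀ i, g i ≠ f i).card : ℤ)
      = ∑ S ∈ (Finset.univ : Finset (Fin n)).powerset,
          (-1 : ℤ) ^ S.card
            * (Finset.univ.filter fun g : Perm (Fin n) => ∀ i ∈ S, g i = f i).card := by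
  classical
  have : ∀ S : Finset (Fin n),
      ((Finset.univ.filter fun g : Perm (Fin n) => ∀ i ∈ S, g i = f i).card : ℤ)
        = ∑ g : Perm (Fin n), (if ∀ i ∈ S, g i = f i then 1 else 0) := by
    intro S
    rw [Finset.sum_boole]
  simp_rw [this, Finset.mul_sum]
  rw [Finset.sum_comm]
  have inner : ∀ g : Perm (Fin n),
      (∑ S ∈ (Finset.univ : Finset (Fin n)).powerset,
        (-1 : ℤ) ^ S.card * (if ∀ i ∈ S, g i = f i then 1 else 0))
      = (if ∀ i, g i ≠ f i then 1 else 0) := by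
    intro g
    set H : Finset (Fin n) := Finset.univ.filter fun i => g i = f i with hH
    have hmem : ∀ S : Finset (Fin n), (∀ i ∈ S, g i = f i) ↔ S ∈ H.powerset := by
      intro S
      simp [hH, Finset.subset_iff, Finset.mem_powerset]
    calc (∑ S ∈ (Finset.univ : Finset (Fin n)).powerset,
        (-1 : ℤ) ^ S.card * (if ∀ i ∈ S, g i = f i then 1 else 0))
        = ∑ S ∈ (Finset.univ : Finset (Fin n)).powerset,
            (if S ∈ H.powerset then (-1 : ℤ) ^ S.card else 0) := by
          refine Finset.sum_congr rfl fun S _ => ?_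
          by_cases h : ∀ i ∈ S, g i = f i
          · rw [if_pos ((hmem S).mp h), if_pos h, mul_one]
          · rw [if_neg (fun hc => h ((hmem S).mpr hc)), if_neg h, mul_zero]
      _ = ∑ S ∈ (Finset.univ : Finset (Fin n)).powerset ∩ H.powerset, (-1 : ℤ) ^ S.card :=
          Finset.sum_ite_mem _ _ _
      _ = ∑ S ∈ H.powerset, (-1 : ℤ) ^ S.card := by
          rw [Finset.inter_eq_right.mpr (Finset.powerset_mono.mpr (Finset.subset_univ H))]
      _ = (if ∀ i, g i ≠ f i then 1 else 0) := by
          rw [Finset.sum_powerset_neg_one_pow_card]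
          congr 1
          simp [hH, Finset.filter_eq_empty_iff, eq_iff_iff]
  simp_rw [inner]
  rw [Finset.sum_boole]

def Ecnt (f : Fin n → Fin n) (j : ℕ) : ℕ :=
  ((Finset.powersetCard j (Finset.univ : Finset (Fin n))).filter
    fun S => ∀ a ∈ S, ∀ b ∈ S, f a = f b → a = b).card

lemma injOn_iff (f : Fin n → Fin n) (S : Finset (Fin n)) :
    Set.InjOn f ↑S ↔ ∀ a ∈ S, ∀ b ∈ S, f a = f b → a = b := by
  constructor
  · intro h a ha b hb hab; exact h (by simpa using ha) (by simpa using hb) hab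
  · intro h a ha b hb hab; exact h a (by simpa using ha) b (by simpa using hb) hab

lemma D_eq (f : Fin n → Fin n) :
    ((Finset.univ.filter fun g : Perm (Fin n) => ∀ i, g i ≠ f i).card : ℤ)
      = ∑ j ∈ Finset.range (n + 1),
          (-1 : ℤ) ^ j * Ecnt f j * Nat.factorial (n - j) := by
  classical
  rw [key_identity f]
  have hcard : (Finset.univ : Finset (Fin n)).card = n := by simp
  rw [Finset.powerset_card_disjiUnion, Finset.sum_disjiUnion (h := (Finset.pairwise_disjoint_powersetCard _).set_pairwise _), hcard]
  refine Finset.sum_congr rfl fun j hj => ?_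
  have hstep : ∀ S ∈ Finset.univ.powersetCard j (α := Fin n),
      (-1 : ℤ) ^ S.card
          * ((Finset.univ.filter fun g : Perm (Fin n) => ∀ i ∈ S, g i = f i).card : ℤ)
        = (if Set.InjOn f ↑S then ((-1 : ℤ) ^ j * Nat.factorial (n - j)) else 0) := by
    intro S hS
    have hSc : S.card = j := (Finset.mem_powersetCard_univ.mp hS)
    by_cases h : Set.InjOn f ↑S
    · rw [if_pos h, card_agree f S h, hSc]
    · rw [if_neg h, card_agree_zero f S h]
      simp
  rw [Finset.sum_congr rfl hstep, Finset.sum_ite, Finset.sum_const, Finset.sum_const,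
    smul_zero, add_zero, nsmul_eq_mul]
  rw [Ecnt]
  have : (Finset.powersetCard j (Finset.univ : Finset (Fin n))).filter
        (fun S : Finset (Fin n) => Set.InjOn f ↑S)
      = (Finset.powersetCard j (Finset.univ : Finset (Fin n))).filter
        (fun S => ∀ a ∈ S, ∀ b ∈ S, f a = f b → a = b) :=
    Finset.filter_congr fun S _ => injOn_iff f S
  rw [this]
  push_cast
  ring

def Bcnt (f : Fin n → Fin n) (j : ℕ) : ℕ :=
  ((Finset.powersetCard j (Finset.univ : Finset (Fin n))).filter
    fun S => ¬ ∀ a ∈ S, ∀ b ∈ S, f a = f b → a = b).card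

lemma E_add_B (f : Fin n → Fin n) (j : ℕ) : Ecnt f j + Bcnt f j = n.choose j := by
  rw [Ecnt, Bcnt, Finset.card_filter_add_card_filter_not, Finset.card_powersetCard]
  simp

lemma card_pairs {k : ℕ} (f : Fin n → Fin n)
    (hFk : ∀ y, (Finset.univ.filter fun i => f i = y).card ≤ k) :
    ((Finset.univ ×ˢ Finset.univ : Finset (Fin n × Fin n)).filter
      fun p => p.1 ≠ p.2 ∧ f p.1 = f p.2).card ≤ n * k := by
  classical
  have hsub : ((Finset.univ ×ˢ Finset.univ : Finset (Fin n × Fin n)).filter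
      fun p => p.1 ≠ p.2 ∧ f p.1 = f p.2)
      ⊆ Finset.univ.biUnion (fun a : Fin n =>
          ({a} : Finset (Fin n)) ×ˢ (Finset.univ.filter fun b => f b = f a)) := by
    intro p hp
    simp only [Finset.mem_filter] at hp
    refine Finset.mem_biUnion.mpr ⟨p.1, Finset.mem_univ _, ?_⟩
    rw [Finset.mem_product]
    exact ⟨Finset.mem_singleton_self _, by simp [hp.2.2]⟩
  calc _ ≤ _ := Finset.card_le_card hsub
    _ ≤ ∑ a : Fin n, (({a} : Finset (Fin n)) ×ˢ (Finset.univ.filter fun b => f b = f a)).card :=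
        Finset.card_biUnion_le
    _ ≤ ∑ _a : Fin n, k := by
        refine Finset.sum_le_sum fun a _ => ?_
        rw [Finset.card_product, Finset.card_singleton, one_mul]
        exact hFk (f a)
    _ = n * k := by simp [mul_comm]

lemma card_supersets (a b : Fin n) (hab : a ≠ b) (j : ℕ) :
    ((Finset.powersetCard j (Finset.univ : Finset (Fin n))).filter
      fun S => a ∈ S ∧ b ∈ S).card ≤ (n - 2).choose (j - 2) := by
  classical
  have htarget : (Finset.powersetCard (j - 2) (({a, b} : Finset (Fin n))ᶜ)).card
      = (n - 2).choose (j - 2) := by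
    rw [Finset.card_powersetCard, Finset.card_compl, Finset.card_pair hab, Fintype.card_fin]
  rw [← htarget]
  apply Finset.card_le_card_of_injOn (fun S => S \ {a, b})
  · intro S hS
    simp only [Finset.mem_coe, Finset.mem_filter, Finset.mem_powersetCard] at hS
    obtain ⟨⟨_, hScard⟩, haS, hbS⟩ := hS
    have hpair : ({a, b} : Finset (Fin n)) ⊆ S := by
      intro x hx
      rcases Finset.mem_insert.mp hx with rfl | hx
      · exact haS
      · exact (Finset.mem_singleton.mp hx) ▸ hbS
    rw [Finset.mem_coe, Finset.mem_powersetCard]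
    constructor
    · intro x hx
      simp only [Finset.mem_sdiff] at hx
      simpa using hx.2
    · rw [Finset.card_sdiff_of_subset hpair, Finset.card_pair hab, hScard]
  · intro S hS T hT hST
    simp only [Finset.coe_filter, Set.mem_setOf_eq, Finset.mem_powersetCard] at hS hT
    have hpS : ({a, b} : Finset (Fin n)) ⊆ S := by
      intro x hx
      rcases Finset.mem_insert.mp hx with rfl | hx
      · exact hS.2.1
      · exact (Finset.mem_singleton.mp hx) ▸ hS.2.2
    have hpT : ({a, b} : Finset (Fin n)) ⊆ T := by
      intro x hx
      rcases Finset.mem_insert.mp hx with rfl | hx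
      · exact hT.2.1
      · exact (Finset.mem_singleton.mp hx) ▸ hT.2.2
    have : S \ {a, b} ∪ {a, b} = T \ {a, b} ∪ {a, b} := by
      simp only at hST
      rw [hST]
    rwa [Finset.sdiff_union_of_subset hpS, Finset.sdiff_union_of_subset hpT] at this

lemma B_le {k : ℕ} (f : Fin n → Fin n)
    (hFk : ∀ y, (Finset.univ.filter fun i => f i = y).card ≤ k) (j : ℕ) :
    Bcnt f j ≤ n * k * (n - 2).choose (j - 2) := by
  classical
  set P := ((Finset.univ ×ˢ Finset.univ : Finset (Fin n × Fin n)).filter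
      fun p => p.1 ≠ p.2 ∧ f p.1 = f p.2) with hP
  have hsub : ((Finset.powersetCard j (Finset.univ : Finset (Fin n))).filter
      fun S => ¬ ∀ a ∈ S, ∀ b ∈ S, f a = f b → a = b)
      ⊆ P.biUnion (fun p => (Finset.powersetCard j (Finset.univ : Finset (Fin n))).filter
          fun S => p.1 ∈ S ∧ p.2 ∈ S) := by
    intro S hS
    simp only [Finset.mem_filter] at hS
    obtain ⟨hS1, hS2⟩ := hS
    push_neg at hS2
    obtain ⟨a, ha, b, hb, hfab, hab⟩ := hS2
    refine Finset.mem_biUnion.mpr ⟨(a, b), ?_, ?_⟩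
    · simp [hP, hab, hfab]
    · simp [Finset.mem_filter, hS1, ha, hb]
  calc Bcnt f j ≤ _ := Finset.card_le_card hsub
    _ ≤ ∑ p ∈ P, ((Finset.powersetCard j (Finset.univ : Finset (Fin n))).filter
          fun S => p.1 ∈ S ∧ p.2 ∈ S).card := Finset.card_biUnion_le
    _ ≤ ∑ p ∈ P, (n - 2).choose (j - 2) := by
        refine Finset.sum_le_sum fun p hp => ?_
        have hab : p.1 ≠ p.2 := by
          simp only [hP, Finset.mem_filter] at hp
          exact hp.2.1
        exact card_supersets p.1 p.2 hab j
    _ = P.card * (n - 2).choose (j - 2) := by rw [Finset.sum_const, smul_eq_mul]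
    _ ≤ n * k * (n - 2).choose (j - 2) :=
        Nat.mul_le_mul_right _ (card_pairs f hFk)

lemma B_eq_zero (f : Fin n → Fin n) (j : ℕ) (hj : j ≤ 1) : Bcnt f j = 0 := by
  rw [Bcnt, Finset.card_eq_zero, Finset.filter_eq_empty_iff]
  intro S hS
  rw [Finset.mem_powersetCard] at hS
  push_neg
  intro a ha b hb _
  by_contra hab
  have : 2 ≤ S.card := Finset.one_lt_card.mpr ⟨a, ha, b, hb, hab⟩
  omega

lemma choose_id {j : ℕ} (hj : j ≤ n) :
    ((n.choose j : ℝ)) * (Nat.factorial (n - j)) / (Nat.factorial n) =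
      1 / (Nat.factorial j) := by
  have key : (n.choose j : ℝ) * (Nat.factorial j) * (Nat.factorial (n - j))
      = Nat.factorial n := by
    exact_mod_cast congrArg Nat.cast (Nat.choose_mul_factorial_mul_factorial hj)
  have h1 : (Nat.factorial n : ℝ) ≠ 0 := Nat.cast_ne_zero.mpr (Nat.factorial_ne_zero n)
  have h2 : (Nat.factorial j : ℝ) ≠ 0 := Nat.cast_ne_zero.mpr (Nat.factorial_ne_zero j)
  field_simp
  linear_combination key

lemma term_bound (f : Fin n → Fin n) {j : ℕ} (hj : j ≤ n) :
    |(-1 : ℝ) ^ j * (Ecnt f j) * (Nat.factorial (n - j)) / (Nat.factorial n)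
        - (-1 : ℝ) ^ j / (Nat.factorial j)|
      = (Bcnt f j : ℝ) * (Nat.factorial (n - j)) / (Nat.factorial n) := by
  have h1 := choose_id (n := n) hj
  have h2 : (Ecnt f j : ℝ) + (Bcnt f j : ℝ) = (n.choose j : ℝ) := by
    exact_mod_cast congrArg Nat.cast (E_add_B f j)
  have key : (-1 : ℝ) ^ j * (Ecnt f j) * (Nat.factorial (n - j)) / (Nat.factorial n)
        - (-1 : ℝ) ^ j / (Nat.factorial j)
      = (-1 : ℝ) ^ (j + 1) * ((Bcnt f j : ℝ) * (Nat.factorial (n - j)) / (Nat.factorial n)) := by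
    have h1' : (-1 : ℝ) ^ j / (Nat.factorial j)
        = (-1 : ℝ) ^ j * ((n.choose j : ℝ) * (Nat.factorial (n - j)) / (Nat.factorial n)) := by
      rw [h1]; ring
    rw [h1', ← h2]
    ring
  rw [key, abs_mul, pow_succ, abs_mul, abs_pow, abs_neg, abs_one, one_pow, one_mul, one_mul,
    abs_of_nonneg (by positivity)]

lemma main_est {k : ℕ} (f : Fin n → Fin n) (hn : 2 ≤ n)
    (hFk : ∀ y, (Finset.univ.filter fun i => f i = y).card ≤ k) :
    |((Finset.univ.filter fun g : Perm (Fin n) => ∀ i, g i ≠ f i).card : ℝ)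
          / (Nat.factorial n)
        - ∑ j ∈ Finset.range (n + 1), (-1 : ℝ) ^ j / (Nat.factorial j)|
      ≤ Real.exp 1 * k / ((n : ℝ) - 1) := by
  obtain ⟨m, rfl⟩ : ∃ m, n = m + 2 := ⟨n - 2, by omega⟩
  have hD : ((Finset.univ.filter fun g : Perm (Fin (m + 2)) => ∀ i, g i ≠ f i).card : ℝ)
      = ∑ j ∈ Finset.range (m + 2 + 1),
          (-1 : ℝ) ^ j * Ecnt f j * Nat.factorial (m + 2 - j) := by
    have := D_eq f
    exact_mod_cast congrArg (fun z : ℤ => (z : ℝ)) this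
  rw [hD, Finset.sum_div, ← Finset.sum_sub_distrib]
  have step1 : |∑ j ∈ Finset.range (m + 2 + 1),
        ((-1 : ℝ) ^ j * Ecnt f j * Nat.factorial (m + 2 - j) / Nat.factorial (m + 2)
          - (-1 : ℝ) ^ j / Nat.factorial j)|
      ≤ ∑ j ∈ Finset.range (m + 2 + 1),
          (Bcnt f j : ℝ) * Nat.factorial (m + 2 - j) / Nat.factorial (m + 2) := by
    refine (Finset.abs_sum_le_sum_abs _ _).trans (le_of_eq ?_)
    refine Finset.sum_congr rfl fun j hj => ?_
    have hjN : j ≤ m + 2 := by have := Finset.mem_range.mp hj; omega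
    exact term_bound f hjN
  refine step1.trans ?_
  have hsplit : ∑ j ∈ Finset.range (m + 2 + 1),
      (Bcnt f j : ℝ) * Nat.factorial (m + 2 - j) / Nat.factorial (m + 2)
      = ∑ i ∈ Finset.range (m + 1),
          (Bcnt f (i + 2) : ℝ) * Nat.factorial (m - i) / Nat.factorial (m + 2) := by
    rw [Finset.sum_range_succ' _ (m + 2), Finset.sum_range_succ' _ (m + 1)]
    have h0 : (Bcnt f 0 : ℝ) = 0 := by rw [B_eq_zero f 0 (by norm_num)]; norm_num
    have h1 : (Bcnt f 1 : ℝ) = 0 := by rw [B_eq_zero f 1 (by norm_num)]; norm_num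
    simp only [h0, h1, zero_mul, zero_div, add_zero]
    refine Finset.sum_congr rfl fun i hi => ?_
    have hsub : m + 2 - (i + 1 + 1) = m - i := by omega
    rw [hsub]
  rw [hsplit]
  have hterm : ∀ i ∈ Finset.range (m + 1),
      (Bcnt f (i + 2) : ℝ) * Nat.factorial (m - i) / Nat.factorial (m + 2)
        ≤ (1 / Nat.factorial i) * (k / ((m : ℝ) + 1)) := by
    intro i hi
    have him : i ≤ m := by have := Finset.mem_range.mp hi; omega
    have hB : (Bcnt f (i + 2) : ℝ) ≤ (((m + 2) * k * (m.choose i) : ℕ) : ℝ) := by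
      have h := B_le f hFk (i + 2)
      have h2 : m + 2 - 2 = m := by omega
      have h3 : i + 2 - 2 = i := by omega
      rw [h2, h3] at h
      exact_mod_cast h
    have key : (m.choose i : ℝ) * (Nat.factorial i) * (Nat.factorial (m - i))
        = Nat.factorial m := by
      exact_mod_cast congrArg Nat.cast (Nat.choose_mul_factorial_mul_factorial him)
    have hNfact : (Nat.factorial (m + 2) : ℝ)
        = ((m : ℝ) + 2) * (((m : ℝ) + 1) * Nat.factorial m) := by
      rw [Nat.factorial_succ, Nat.factorial_succ]
      push_cast
      ring
    have hfi : (0:ℝ) < Nat.factorial i := by positivity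
    have hfm : (0:ℝ) < Nat.factorial m := by positivity
    calc (Bcnt f (i + 2) : ℝ) * Nat.factorial (m - i) / Nat.factorial (m + 2)
        ≤ (((m + 2) * k * (m.choose i) : ℕ) : ℝ) * Nat.factorial (m - i)
            / Nat.factorial (m + 2) := by gcongr
      _ = (1 / Nat.factorial i) * (k / ((m : ℝ) + 1)) := by
          push_cast
          rw [hNfact]
          field_simp
          linear_combination (k : ℝ) * key
  refine (Finset.sum_le_sum hterm).trans ?_
  rw [← Finset.sum_mul]
  have hexp : ∑ i ∈ Finset.range (m + 1), (1 / (Nat.factorial i : ℝ)) ≤ Real.exp 1 := by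
    have := Real.sum_le_exp_of_nonneg (x := 1) zero_le_one (m + 1)
    simpa using this
  have hnm : ((m : ℝ) + 2) - 1 = (m : ℝ) + 1 := by ring
  have : (↑(m + 2) : ℝ) - 1 = (m : ℝ) + 1 := by push_cast; ring
  rw [this]
  have hkpos : (0:ℝ) ≤ k / ((m : ℝ) + 1) := by positivity
  calc (∑ i ∈ Finset.range (m + 1), (1 / (Nat.factorial i : ℝ))) * (k / ((m : ℝ) + 1))
      ≤ Real.exp 1 * (k / ((m : ℝ) + 1)) := mul_le_mul_of_nonneg_right hexp hkpos
    _ = Real.exp 1 * k / ((m : ℝ) + 1) := by ring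


/-- Theorem 1: for a fixed k ≥ 1 and any sequence of k-max functions
f_n : {1,...,n} → {1,...,n}, the fraction of permutations that are
f_n-derangements tends to 1/e. -/
theorem stmt_13 (k : ℕ) (hk : 0 < k) (F : (n : ℕ) → Fin n → Fin n)
    (hF : ∀ (n : ℕ) (y : Fin n),
      (Finset.univ.filter fun i : Fin n => F n i = y).card ≤ k) :
    Tendsto
      (fun n : ℕ =>
        ((Finset.univ.filter fun g : Equiv.Perm (Fin n) => ∀ i, g i ≠ F n i).card : ℝ)
          / (Nat.factorial n))
      atTop (nhds (1 / Real.exp 1)) := by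
  set A : ℕ → ℝ := fun n => ∑ j ∈ Finset.range (n + 1), (-1 : ℝ) ^ j / (Nat.factorial j)
    with hAdef
  set fn : ℕ → ℝ := fun n =>
    ((Finset.univ.filter fun g : Equiv.Perm (Fin n) => ∀ i, g i ≠ F n i).card : ℝ)
      / (Nat.factorial n) with hfn
  have hA : Tendsto A atTop (nhds (Real.exp (-1))) := by
    have hsum : HasSum (fun j : ℕ => (-1 : ℝ) ^ j / (Nat.factorial j)) (Real.exp (-1)) := by
      rw [Real.exp_eq_exp_ℝ]
      exact NormedSpace.expSeries_div_hasSum_exp (-1 : ℝ)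
    have := hsum.tendsto_sum_nat
    rw [← tendsto_add_atTop_iff_nat (f := fun n => ∑ j ∈ Finset.range n,
      (-1 : ℝ) ^ j / (Nat.factorial j)) 1] at this
    exact this
  have hg0 : Tendsto (fun n : ℕ => Real.exp 1 * k / ((n : ℝ) - 1)) atTop (nhds 0) := by
    apply Tendsto.div_atTop (tendsto_const_nhds)
    have := tendsto_atTop_add_const_right atTop (-1 : ℝ) tendsto_natCast_atTop_atTop
    simpa [sub_eq_add_neg] using this
  have hdiff : Tendsto (fun n => fn n - A n) atTop (nhds 0) := by
    apply squeeze_zero_norm' ?_ hg0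
    filter_upwards [eventually_ge_atTop 2] with n hn
    rw [Real.norm_eq_abs]
    exact main_est (F n) hn (hF n)
  have : Tendsto (fun n => (fn n - A n) + A n) atTop (nhds (0 + Real.exp (-1))) :=
    hdiff.add hA
  simpa [Real.exp_neg, one_div] using this
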